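/- Suppose L : ℝᵈ → ℝ satisfies the local restricted strong convexity L(b⁰ + Δ) − L(b⁰) − ⟨∇L(b⁰), Δ⟩ ≥ τ₁‖Δ‖² − τ₂ for all Δ with ‖Δ‖ ≤ β, where τ₁ > 0, τ₂ ≥ 0. If additionally ‖∇L(b⁰)‖ ≤ λ/4 (dual norm bound taken as Euclidean here) and Δ̂ satisfies ⟨∇L(b⁰ + Δ̂) , Δ̂⟩ ≤ 0 with ‖Δ̂‖ ≤ β for a convex L, then τ₁‖Δ̂‖² ≤ (λ/4)‖Δ̂‖ + τ₂, and hence ‖Δ̂‖ ≤ (λ/(8τ₁)) + √(τ₂/τ₁ + λ²/(64τ₁²)). -/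

import Mathlib

theorem lrsc_error_bound {d : ℕ}
    (L : EuclideanSpace ℝ (Fin d) → ℝ)
    (b0 Δhat : EuclideanSpace ℝ (Fin d))
    (τ₁ τ₂ β lam : ℝ)
    (hτ₁ : 0 < τ₁) (hτ₂ : 0 ≤ τ₂) (hβ : 0 < β)
    (hconvex : ConvexOn ℝ Set.univ L)
    (hdiff : Differentiable ℝ L)
    (hlrsc : ∀ Δ : EuclideanSpace ℝ (Fin d), ‖Δ‖ ≤ β →
      L (b0 + Δ) - L b0 - inner ℝ (gradient L b0) Δ ≥ τ₁ * ‖Δ‖ ^ 2 - τ₂)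
    (hgrad : ‖gradient L b0‖ ≤ lam / 4)
    (hstat : inner ℝ (gradient L (b0 + Δhat)) Δhat ≤ (0:ℝ))
    (hball : ‖Δhat‖ ≤ β) :
    τ₁ * ‖Δhat‖ ^ 2 ≤ (lam / 4) * ‖Δhat‖ + τ₂ ∧
      ‖Δhat‖ ≤ lam / (8 * τ₁) + Real.sqrt (τ₂ / τ₁ + lam ^ 2 / (64 * τ₁ ^ 2)) := by
  -- the restriction of L to the segment
  set g : ℝ → ℝ := fun t => L (b0 + t • Δhat) with hg
  have hgconv : ConvexOn ℝ Set.univ g := by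
    have h := hconvex.comp_affineMap (AffineMap.lineMap b0 (b0 + Δhat))
    have heq : (L ∘ (AffineMap.lineMap b0 (b0 + Δhat))) = g := by
      funext t
      simp [hg, AffineMap.lineMap_apply, add_comm]
    rw [heq] at h
    simpa using h
  have hgderiv : ∀ t : ℝ,
      HasDerivAt g (inner ℝ (gradient L (b0 + t • Δhat)) Δhat) t := by
    intro t
    have hc : HasDerivAt (fun s : ℝ => b0 + s • Δhat) Δhat t := by
      simpa using ((hasDerivAt_id t).smul_const Δhat).const_add b0
    have hL : HasFDerivAt L
        ((InnerProductSpace.toDual ℝ _) (gradient L (b0 + t • Δhat))) (b0 + t • Δhat) :=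
      (hdiff (b0 + t • Δhat)).hasGradientAt
    have h := hL.comp_hasDerivAt t hc
    simp at h ⊢
    exact h
  have hslope : slope g 0 1 ≤ inner ℝ (gradient L (b0 + Δhat)) Δhat := by
    have h := hgconv.slope_le_of_hasDerivAt (Set.mem_univ 0) (Set.mem_univ 1)
      zero_lt_one (hgderiv 1)
    simpa using h
  have hdesc : L (b0 + Δhat) - L b0 ≤ (0:ℝ) := by
    have hs : slope g 0 1 = L (b0 + Δhat) - L b0 := by
      simp [slope, hg]
    rw [hs] at hslope
    exact hslope.trans hstat
  -- the quadratic inequality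
  have hinner : -(inner ℝ (gradient L b0) Δhat : ℝ) ≤ (lam / 4) * ‖Δhat‖ := by
    have h1 : |(inner ℝ (gradient L b0) Δhat : ℝ)| ≤ ‖gradient L b0‖ * ‖Δhat‖ :=
      abs_real_inner_le_norm _ _
    have h2 : ‖gradient L b0‖ * ‖Δhat‖ ≤ (lam / 4) * ‖Δhat‖ :=
      mul_le_mul_of_nonneg_right hgrad (norm_nonneg _)
    nlinarith [abs_nonneg (inner ℝ (gradient L b0) Δhat : ℝ),
      neg_abs_le (inner ℝ (gradient L b0) Δhat : ℝ)]
  have hq : τ₁ * ‖Δhat‖ ^ 2 ≤ (lam / 4) * ‖Δhat‖ + τ₂ := by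
    have h := hlrsc Δhat hball
    linarith
  refine ⟨hq, ?_⟩
  set x := ‖Δhat‖ with hx
  have hsq : (x - lam / (8 * τ₁)) ^ 2 ≤ τ₂ / τ₁ + lam ^ 2 / (64 * τ₁ ^ 2) := by
    have h1 : τ₂ / τ₁ + lam ^ 2 / (64 * τ₁ ^ 2) - (x - lam / (8 * τ₁)) ^ 2
        = (τ₂ + lam / 4 * x - τ₁ * x ^ 2) / τ₁ := by
      field_simp
      ring
    have h2 : (0:ℝ) ≤ (τ₂ + lam / 4 * x - τ₁ * x ^ 2) / τ₁ :=
      div_nonneg (by linarith) hτ₁.le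
    linarith [h1 ▸ h2]
  have : x - lam / (8 * τ₁) ≤ Real.sqrt (τ₂ / τ₁ + lam ^ 2 / (64 * τ₁ ^ 2)) := by
    calc x - lam / (8 * τ₁) ≤ |x - lam / (8 * τ₁)| := le_abs_self _
    _ = Real.sqrt ((x - lam / (8 * τ₁)) ^ 2) := (Real.sqrt_sq_eq_abs _).symm
    _ ≤ _ := Real.sqrt_le_sqrt hsq
  linarith
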